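/- (Semantic rate-distortion coding theorem, converse part) Let X and X̂ be finite sets, p a probability mass function on X, partitions {X_s : s ∈ S} of X and {X̂_t : t ∈ T} of X̂ with class-index maps s(·) and t(·), d_s : S × T → [0, d_max] a bounded semantic distortion function, and R_s(D) the semantic rate-distortion function. If R < R_s(D), then for any sequence of codes consisting of encoders φ_n : X^n → M_n with |M_n| ≤ 2^{nR} and decoders ψ_n : M_n → X̂^n, the expected semantic distortion E[ (1/n) Σ_{k=1}^n d_s( s(X_k), t(ψ_n(φ_n(X^n))_k) ) ] exceeds D for all sufficiently large n, where X_1,...,X_n are i.i.d. with distribution p. -/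

import Mathlib

open Finset
open scoped Classical

/-- Probability of a class of the partition induced by a class-index map `c`:
`P(U_s) = Σ_{u ∈ U_s} p u`. -/
noncomputable def Pclass {U S : Type*} [Fintype U] (p : U → ℝ) (c : U → S) (s : S) : ℝ :=
  ∑ u : U, if c u = s then p u else 0

/-- Semantic entropy `H_s(Ũ) = −Σ_s P(U_s) log₂ P(U_s)`. -/
noncomputable def semEntropy {U S : Type*} [Fintype U] [Fintype S]
    (p : U → ℝ) (c : U → S) : ℝ :=
  -∑ s : S, Pclass p c s * Real.logb 2 (Pclass p c s)

/-- Shannon entropy `H(U) = −Σ_u p(u) log₂ p(u)`. -/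
noncomputable def shEntropy {U : Type*} [Fintype U] (p : U → ℝ) : ℝ :=
  -∑ u : U, p u * Real.logb 2 (p u)

/-- Probability of a product class `P(U_s × V_t) = Σ_{u∈U_s} Σ_{v∈V_t} p(u,v)`. -/
noncomputable def PjointClass {U V S T : Type*} [Fintype U] [Fintype V]
    (p : U → V → ℝ) (cU : U → S) (cV : V → T) (s : S) (t : T) : ℝ :=
  ∑ u : U, ∑ v : V, if cU u = s ∧ cV v = t then p u v else 0

/-- Semantic joint entropy `H_s(Ũ,Ṽ) = −Σ_{s,t} P(U_s × V_t) log₂ P(U_s × V_t)`. -/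
noncomputable def semJointEntropy {U V S T : Type*} [Fintype U] [Fintype V] [Fintype S] [Fintype T]
    (p : U → V → ℝ) (cU : U → S) (cV : V → T) : ℝ :=
  -∑ s : S, ∑ t : T, PjointClass p cU cV s t * Real.logb 2 (PjointClass p cU cV s t)

/-- Shannon joint entropy `H(U,V) = −Σ_{u,v} p(u,v) log₂ p(u,v)`. -/
noncomputable def shJointEntropy {U V : Type*} [Fintype U] [Fintype V] (p : U → V → ℝ) : ℝ :=
  -∑ u : U, ∑ v : V, p u v * Real.logb 2 (p u v)

/-- Marginal `p(u) = Σ_v p(u,v)`. -/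
noncomputable def margU {U V : Type*} [Fintype V] (p : U → V → ℝ) (u : U) : ℝ :=
  ∑ v : V, p u v

/-- Marginal `p(v) = Σ_u p(u,v)`. -/
noncomputable def margV {U V : Type*} [Fintype U] (p : U → V → ℝ) (v : V) : ℝ :=
  ∑ u : U, p u v

/-- `p(U_s, v) = Σ_{u ∈ U_s} p(u,v)`. -/
noncomputable def PclassU {U V S : Type*} [Fintype U]
    (p : U → V → ℝ) (cU : U → S) (s : S) (v : V) : ℝ :=
  ∑ u : U, if cU u = s then p u v else 0

/-- `p(u, V_t) = Σ_{v ∈ V_t} p(u,v)`. -/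
noncomputable def PclassV {U V T : Type*} [Fintype V]
    (p : U → V → ℝ) (cV : V → T) (u : U) (t : T) : ℝ :=
  ∑ v : V, if cV v = t then p u v else 0

/-- Semantic conditional entropy
`H_s(Ũ|V) = −Σ_v Σ_s p(U_s, v) log₂ (p(U_s, v)/p(v))` (terms with `p(v) = 0` vanish). -/
noncomputable def semCondEntropyU {U V S : Type*} [Fintype U] [Fintype V] [Fintype S]
    (p : U → V → ℝ) (cU : U → S) : ℝ :=
  -∑ v : V, ∑ s : S, PclassU p cU s v * Real.logb 2 (PclassU p cU s v / margV p v)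

/-- Semantic conditional entropy
`H_s(Ṽ|U) = −Σ_u Σ_t p(u, V_t) log₂ (p(u, V_t)/p(u))` (terms with `p(u) = 0` vanish). -/
noncomputable def semCondEntropyV {U V T : Type*} [Fintype U] [Fintype V] [Fintype T]
    (p : U → V → ℝ) (cV : V → T) : ℝ :=
  -∑ u : U, ∑ t : T, PclassV p cV u t * Real.logb 2 (PclassV p cV u t / margU p u)

/-- Shannon conditional entropy `H(U|V) = −Σ_{u,v} p(u,v) log₂ (p(u,v)/p(v))`
(terms with `p(v) = 0` vanish). -/
noncomputable def shCondEntropyU {U V : Type*} [Fintype U] [Fintype V] (p : U → V → ℝ) : ℝ :=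
  -∑ u : U, ∑ v : V, p u v * Real.logb 2 (p u v / margV p v)

/-- Mutual information `I(U;V) = H(U) + H(V) − H(U,V)`. -/
noncomputable def mutualInfo {U V : Type*} [Fintype U] [Fintype V] (p : U → V → ℝ) : ℝ :=
  shEntropy (margU p) + shEntropy (margV p) - shJointEntropy p

/-- Down semantic mutual information `I_s(Ũ;Ṽ) = H_s(Ũ) + H_s(Ṽ) − H(U,V)`. -/
noncomputable def downSMI {U V S T : Type*} [Fintype U] [Fintype V] [Fintype S] [Fintype T]
    (p : U → V → ℝ) (cU : U → S) (cV : V → T) : ℝ :=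
  semEntropy (margU p) cU + semEntropy (margV p) cV - shJointEntropy p

/-- Up semantic mutual information `I^s(Ũ;Ṽ) = H(U) + H(V) − H_s(Ũ,Ṽ)`. -/
noncomputable def upSMI {U V S T : Type*} [Fintype U] [Fintype V] [Fintype S] [Fintype T]
    (p : U → V → ℝ) (cU : U → S) (cV : V → T) : ℝ :=
  shEntropy (margU p) + shEntropy (margV p) - semJointEntropy p cU cV

/-- A test channel: a conditional pmf `q(x̂|x)`. -/
def IsTestChannel {X Xhat : Type*} [Fintype Xhat] (q : X → Xhat → ℝ) : Prop :=
  (∀ x xh, 0 ≤ q x xh) ∧ ∀ x, ∑ xh : Xhat, q x xh = 1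

/-- The semantic rate-distortion function
`R_s(D) = min { I_s(X̃;X̂̃) : q a test channel with E[d_s] ≤ D }`, where all quantities are
computed from the joint distribution `r(x,x̂) = p(x) q(x̂|x)` and the expected semantic
distortion is `Σ_{x,x̂} r(x,x̂) d_s(s(x), t(x̂))`. -/
noncomputable def semRateDistortion {X Xhat S T : Type*}
    [Fintype X] [Fintype Xhat] [Fintype S] [Fintype T]
    (p : X → ℝ) (cX : X → S) (cT : Xhat → T) (d : S → T → ℝ) (D : ℝ) : ℝ :=
  sInf {r : ℝ | ∃ q : X → Xhat → ℝ, IsTestChannel q ∧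
      (∑ x : X, ∑ xh : Xhat, p x * q x xh * d (cX x) (cT xh)) ≤ D ∧
      r = downSMI (fun x xh => p x * q x xh) cX cT}


lemma RD_pt {a b : ℝ} (ha : 0 ≤ a) (hb : 0 ≤ b) (hab : a ≠ 0 → b ≠ 0) :
    (a - b) / Real.log 2 ≤ a * Real.logb 2 (a / b) := by
  have h2 : (0:ℝ) < Real.log 2 := Real.log_pos one_lt_two
  rcases ha.eq_or_lt with h0 | h0
  · rw [← h0, zero_mul, zero_sub]
    exact div_nonpos_of_nonpos_of_nonneg (neg_nonpos.2 hb) h2.le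
  · have hbpos : 0 < b := lt_of_le_of_ne hb (Ne.symm (hab h0.ne'))
    have key : Real.log (b / a) ≤ b / a - 1 := Real.log_le_sub_one_of_pos (by positivity)
    have hinv : Real.log (a / b) = - Real.log (b / a) := by
      rw [← Real.log_inv]; congr 1; field_simp
    have key2 : a - b ≤ a * Real.log (a / b) := by
      have h3 := mul_le_mul_of_nonneg_left key h0.le
      rw [hinv]
      have h4 : a * (b / a - 1) = b - a := by field_simp
      nlinarith
    rw [Real.logb, ← mul_div_assoc]
    exact (div_le_div_iff_of_pos_right h2).mpr key2

lemma RD_gibbs {I : Type*} [Fintype I] (a b : I → ℝ) (ha : ∀ i, 0 ≤ a i)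
    (hb : ∀ i, 0 ≤ b i) (hab : ∀ i, a i ≠ 0 → b i ≠ 0)
    (hs : ∑ i, b i ≤ ∑ i, a i) :
    0 ≤ ∑ i, a i * Real.logb 2 (a i / b i) := by
  have h2 : (0:ℝ) < Real.log 2 := Real.log_pos one_lt_two
  have h := Finset.sum_le_sum (fun i (_ : i ∈ Finset.univ) => RD_pt (ha i) (hb i) (hab i))
  calc (0:ℝ) ≤ (∑ i, a i - ∑ i, b i) / Real.log 2 :=
        div_nonneg (sub_nonneg.2 hs) h2.le
    _ = ∑ i, (a i - b i) / Real.log 2 := by rw [← Finset.sum_sub_distrib, ← Finset.sum_div]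
    _ ≤ _ := h

lemma RD_Pclass_nonneg {U S : Type*} [Fintype U] (q : U → ℝ) (hq : ∀ u, 0 ≤ q u) (c : U → S)
    (s : S) : 0 ≤ Pclass q c s :=
  Finset.sum_nonneg fun u _ => by by_cases h : c u = s <;> simp [h, hq u]

lemma RD_le_Pclass {U S : Type*} [Fintype U] (q : U → ℝ) (hq : ∀ u, 0 ≤ q u) (c : U → S)
    (u : U) : q u ≤ Pclass q c (c u) := by
  have := Finset.single_le_sum (f := fun u' => if c u' = c u then q u' else 0)
    (fun i _ => by by_cases h : c i = c u <;> simp [h, hq i]) (Finset.mem_univ u)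
  simpa [Pclass] using this

lemma RD_semEntropy_le {U S : Type*} [Fintype U] [Fintype S] (q : U → ℝ)
    (hq : ∀ u, 0 ≤ q u) (c : U → S) : semEntropy q c ≤ shEntropy q := by
  unfold semEntropy shEntropy
  apply neg_le_neg
  have expand : ∀ u, q u * Real.logb 2 (q u)
      = ∑ s : S, if c u = s then q u * Real.logb 2 (q u) else 0 := by
    intro u; simp [Finset.sum_ite_eq]
  calc ∑ u, q u * Real.logb 2 (q u)
      = ∑ u, ∑ s : S, (if c u = s then q u * Real.logb 2 (q u) else 0) := by
        exact Finset.sum_congr rfl fun u _ => expand u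
    _ = ∑ s : S, ∑ u, (if c u = s then q u * Real.logb 2 (q u) else 0) := Finset.sum_comm
    _ ≤ ∑ s : S, Pclass q c s * Real.logb 2 (Pclass q c s) := by
        apply Finset.sum_le_sum
        intro s _
        have step1 : ∑ u, (if c u = s then q u * Real.logb 2 (q u) else 0)
            ≤ ∑ u, (if c u = s then q u else 0) * Real.logb 2 (Pclass q c s) := by
          apply Finset.sum_le_sum
          intro u _
          by_cases hcu : c u = s
          · simp only [hcu, if_pos rfl, ite_mul]
            rcases (hq u).eq_or_lt with h0 | h0
            · simp [← h0]
            · have hle : q u ≤ Pclass q c s := hcu ▸ RD_le_Pclass q hq c u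
              exact mul_le_mul_of_nonneg_left
                (Real.logb_le_logb_of_le one_lt_two h0 hle) (hq u)
          · simp [hcu]
        calc ∑ u, (if c u = s then q u * Real.logb 2 (q u) else 0)
            ≤ ∑ u, (if c u = s then q u else 0) * Real.logb 2 (Pclass q c s) := step1
          _ = Pclass q c s * Real.logb 2 (Pclass q c s) := by
              rw [← Finset.sum_mul]; rfl

lemma RD_semEntropy_nonneg {U S : Type*} [Fintype U] [Fintype S] (q : U → ℝ)
    (hq : ∀ u, 0 ≤ q u) (h1 : ∑ u, q u ≤ 1) (c : U → S) : 0 ≤ semEntropy q c := by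
  unfold semEntropy
  rw [neg_nonneg]
  apply Finset.sum_nonpos
  intro s _
  have h0 : 0 ≤ Pclass q c s := RD_Pclass_nonneg q hq c s
  have hle : Pclass q c s ≤ 1 := by
    refine le_trans ?_ h1
    apply Finset.sum_le_sum
    intro u _; by_cases h : c u = s <;> simp [h, hq u]
  exact mul_nonpos_of_nonneg_of_nonpos h0 (Real.logb_nonpos one_lt_two h0 hle)

lemma RD_shJointEntropy_le {U V : Type*} [Fintype U] [Fintype V] [Nonempty U] [Nonempty V]
    (w : U → V → ℝ) (hw : ∀ u v, 0 ≤ w u v) (h1 : ∑ u, ∑ v, w u v = 1) :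
    shJointEntropy w ≤ Real.logb 2 ((Fintype.card U : ℝ) * (Fintype.card V : ℝ)) := by
  have hN : (0:ℝ) < (Fintype.card U : ℝ) * (Fintype.card V : ℝ) := by
    have h1 := Fintype.card_pos (α := U); have h2 := Fintype.card_pos (α := V); positivity
  set N : ℝ := (Fintype.card U : ℝ) * (Fintype.card V : ℝ) with hNdef
  have h1' : ∑ uv : U × V, w uv.1 uv.2 = 1 := by
    rw [Fintype.sum_prod_type]; exact h1
  have key := RD_gibbs (I := U × V) (fun uv => w uv.1 uv.2) (fun _ => N⁻¹)
    (fun uv => hw uv.1 uv.2) (fun _ => by positivity)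
    (fun uv h => by positivity)
    (by
      rw [Finset.sum_const, Finset.card_univ, Fintype.card_prod, nsmul_eq_mul, Nat.cast_mul,
        ← hNdef, mul_inv_cancel₀ hN.ne', h1'])
  have expand : ∀ uv : U × V, w uv.1 uv.2 * Real.logb 2 (w uv.1 uv.2 / N⁻¹)
      = w uv.1 uv.2 * Real.logb 2 (w uv.1 uv.2) + w uv.1 uv.2 * Real.logb 2 N := by
    intro uv
    rcases (hw uv.1 uv.2).eq_or_lt with h0 | h0
    · simp [← h0]
    · rw [div_eq_mul_inv, inv_inv, Real.logb_mul h0.ne' hN.ne', mul_add]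
  rw [Finset.sum_congr rfl (fun uv _ => expand uv), Finset.sum_add_distrib,
    ← Finset.sum_mul, h1', one_mul] at key
  have e : ∑ uv : U × V, w uv.1 uv.2 * Real.logb 2 (w uv.1 uv.2)
      = ∑ u, ∑ v, w u v * Real.logb 2 (w u v) := by
    rw [Fintype.sum_prod_type]
  rw [e] at key
  unfold shJointEntropy
  linarith

lemma RD_margU_nonneg {U V : Type*} [Fintype V] (r : U → V → ℝ) (hr : ∀ u v, 0 ≤ r u v) (u : U) :
    0 ≤ margU r u := Finset.sum_nonneg fun v _ => hr u v

lemma RD_margV_nonneg {U V : Type*} [Fintype U] (r : U → V → ℝ) (hr : ∀ u v, 0 ≤ r u v) (v : V) :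
    0 ≤ margV r v := Finset.sum_nonneg fun u _ => hr u v

lemma RD_le_margU {U V : Type*} [Fintype V] (r : U → V → ℝ) (hr : ∀ u v, 0 ≤ r u v) (u : U)
    (v : V) : r u v ≤ margU r u :=
  Finset.single_le_sum (fun v' _ => hr u v') (Finset.mem_univ v)

lemma RD_le_margV {U V : Type*} [Fintype U] (r : U → V → ℝ) (hr : ∀ u v, 0 ≤ r u v) (u : U)
    (v : V) : r u v ≤ margV r v :=
  Finset.single_le_sum (fun u' _ => hr u' v) (Finset.mem_univ u)

lemma RD_mutualInfo_eq {U V : Type*} [Fintype U] [Fintype V] (r : U → V → ℝ)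
    (hr : ∀ u v, 0 ≤ r u v) :
    mutualInfo r = ∑ u, ∑ v, r u v * Real.logb 2 (r u v / (margU r u * margV r v)) := by
  have pt : ∀ u v, r u v * Real.logb 2 (r u v / (margU r u * margV r v))
      = r u v * Real.logb 2 (r u v) - r u v * Real.logb 2 (margU r u)
        - r u v * Real.logb 2 (margV r v) := by
    intro u v
    rcases (hr u v).eq_or_lt with h0 | h0
    · simp [← h0]
    · have hU : 0 < margU r u := lt_of_lt_of_le h0 (RD_le_margU r hr u v)
      have hV : 0 < margV r v := lt_of_lt_of_le h0 (RD_le_margV r hr u v)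
      rw [Real.logb_div h0.ne' (by positivity), Real.logb_mul hU.ne' hV.ne']
      ring
  have e1 : ∑ u, margU r u * Real.logb 2 (margU r u)
      = ∑ u, ∑ v, r u v * Real.logb 2 (margU r u) := by
    apply Finset.sum_congr rfl; intro u _
    rw [margU, Finset.sum_mul]
  have e2 : ∑ v, margV r v * Real.logb 2 (margV r v)
      = ∑ u, ∑ v, r u v * Real.logb 2 (margV r v) := by
    rw [Finset.sum_comm]
    apply Finset.sum_congr rfl; intro v _
    rw [margV, Finset.sum_mul]
  have hcongr : (∑ u, ∑ v, r u v * Real.logb 2 (r u v / (margU r u * margV r v)))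
      = ∑ u, ∑ v, (r u v * Real.logb 2 (r u v) - r u v * Real.logb 2 (margU r u)
        - r u v * Real.logb 2 (margV r v)) :=
    Finset.sum_congr rfl fun u _ => Finset.sum_congr rfl fun v _ => pt u v
  unfold mutualInfo shEntropy shJointEntropy
  rw [e1, e2, hcongr]
  simp only [Finset.sum_sub_distrib]
  ring

/-- Semantic rate-distortion coding theorem, converse part: Let `p` be a pmf on
a finite set `X`, with partitions of `X` and `X̂` encoded by surjective class-index maps `cX`,
`cT`, a bounded semantic distortion `d_s : S × T → [0, d_max]`, and semantic rate-distortion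
function `R_s(D)` (with nonempty feasible set of test channels at distortion level `D`).
If `R < R_s(D)`, then for any sequence of codes with encoders `φ n : X^n → Fin (m n)`,
`m n ≤ 2^{nR}`, and decoders `ψ n : Fin (m n) → X̂^n`, the expected semantic distortion
`E[(1/n) Σ_k d_s(s(X_k), t(ψ_n(φ_n(X^n))_k))]` exceeds `D` for all sufficiently large `n`,
where `X_1,…,X_n` are i.i.d. with distribution `p`. -/
theorem semantic_rate_distortion_converse
    {X Xhat S T : Type*} [Fintype X] [Fintype Xhat] [Fintype S] [Fintype T]
    (p : X → ℝ) (hp0 : ∀ x, 0 ≤ p x) (hp1 : ∑ x : X, p x = 1)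
    (cX : X → S) (hcX : Function.Surjective cX)
    (cT : Xhat → T) (hcT : Function.Surjective cT)
    (d : S → T → ℝ) (dmax : ℝ) (hd0 : ∀ s t, 0 ≤ d s t) (hdmax : ∀ s t, d s t ≤ dmax)
    (D : ℝ)
    (hfeas : ∃ q : X → Xhat → ℝ, IsTestChannel q ∧
      (∑ x : X, ∑ xh : Xhat, p x * q x xh * d (cX x) (cT xh)) ≤ D)
    (R : ℝ) (hR : R < semRateDistortion p cX cT d D)
    (m : ℕ → ℕ) (hm : ∀ n : ℕ, (m n : ℝ) ≤ 2 ^ ((n : ℝ) * R))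
    (φ : ∀ n, (Fin n → X) → Fin (m n)) (ψ : ∀ n, Fin (m n) → Fin n → Xhat) :
    ∃ N : ℕ, ∀ n ≥ N,
      D < ∑ x : Fin n → X, (∏ k : Fin n, p (x k)) *
            ((1 / (n : ℝ)) * ∑ k : Fin n, d (cX (x k)) (cT (ψ n (φ n x) k))) := by
  refine ⟨1, fun n hn => ?_⟩
  by_contra hcon
  push_neg at hcon
  have hnpos : (0:ℝ) < (n:ℝ) := by exact_mod_cast Nat.lt_of_lt_of_le Nat.zero_lt_one hn
  have hXne : Nonempty X := by
    by_contra h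
    rw [not_nonempty_iff] at h
    simp [Finset.univ_eq_empty] at hp1
  obtain ⟨x0⟩ := hXne
  have hXhatne : Nonempty Xhat := ⟨ψ n (φ n (fun _ => x0)) ⟨0, hn⟩⟩
  have hmn : 0 < m n := Fin.pos (φ n (fun _ => x0))
  -- basic data
  set P : (Fin n → X) → ℝ := fun x => ∏ k, p (x k) with hPdef
  set g : (Fin n → X) → (Fin n → Xhat) := fun x => ψ n (φ n x) with hgdef
  set rk : Fin n → X → Xhat → ℝ :=
    fun k a b => ∑ x : Fin n → X, if x k = a ∧ g x k = b then P x else 0 with hrkdef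
  set rbar : X → Xhat → ℝ := fun a b => (∑ k, rk k a b) / (n:ℝ) with hrbardef
  have hP0 : ∀ x, 0 ≤ P x := fun x => Finset.prod_nonneg fun k _ => hp0 (x k)
  have hPsum : ∑ x : Fin n → X, P x = 1 := by
    rw [hPdef, ← Fintype.prod_sum (f := fun _ : Fin n => p)]
    simp [hp1]
  have hrk0 : ∀ k a b, 0 ≤ rk k a b :=
    fun k a b => Finset.sum_nonneg fun x _ => by by_cases h : x k = a ∧ g x k = b <;> simp [h, hP0 x]
  have hrkP : ∀ k (x : Fin n → X), P x ≤ rk k (x k) (g x k) := by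
    intro k x
    have := Finset.single_le_sum
      (f := fun x' : Fin n → X => if x' k = x k ∧ g x' k = g x k then P x' else 0)
      (fun i _ => by by_cases h : i k = x k ∧ g i k = g x k <;> simp [h, hP0 i])
      (Finset.mem_univ x)
    simpa using this
  have hmarg : ∀ (k : Fin n) a, (∑ x : Fin n → X, if x k = a then P x else 0) = p a := by
    intro k a
    have e : ∀ x : Fin n → X, (if x k = a then P x else 0)
        = ∏ j, (if j = k then (if x j = a then p (x j) else 0) else p (x j)) := by
      intro x
      by_cases h : x k = a
      · rw [if_pos h, hPdef]
        apply Finset.prod_congr rfl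
        intro j _
        by_cases hj : j = k <;> simp [hj, h]
      · rw [if_neg h]
        symm
        apply Finset.prod_eq_zero (Finset.mem_univ k)
        simp [h]
    rw [Finset.sum_congr rfl fun x _ => e x,
      ← Fintype.prod_sum (f := fun (j : Fin n) (c : X) =>
        if j = k then (if c = a then p c else 0) else p c)]
    rw [Fintype.prod_eq_single k ?_]
    · simp [Finset.sum_ite_eq']
    · intro j hj
      simp [if_neg hj, hp1]
  have hrkmargU : ∀ k a, margU (rk k) a = p a := by
    intro k a
    have inner : ∀ x : Fin n → X,
        (∑ b : Xhat, if x k = a ∧ g x k = b then P x else 0) = (if x k = a then P x else 0) := by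
      intro x
      by_cases hxa : x k = a <;> simp [hxa, Finset.sum_ite_eq]
    calc margU (rk k) a
        = ∑ b : Xhat, ∑ x : Fin n → X, (if x k = a ∧ g x k = b then P x else 0) := rfl
      _ = ∑ x : Fin n → X, ∑ b : Xhat, (if x k = a ∧ g x k = b then P x else 0) :=
          Finset.sum_comm
      _ = ∑ x : Fin n → X, (if x k = a then P x else 0) :=
          Finset.sum_congr rfl fun x _ => inner x
      _ = p a := hmarg k a
  have hrksum : ∀ k, ∑ a : X, ∑ b : Xhat, rk k a b = 1 := by
    intro k
    calc ∑ a : X, ∑ b : Xhat, rk k a b = ∑ a : X, margU (rk k) a := rfl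
      _ = ∑ a : X, p a := Finset.sum_congr rfl fun a _ => hrkmargU k a
      _ = 1 := hp1
  have hswap : ∀ (k : Fin n) (F : X → Xhat → ℝ),
      ∑ a : X, ∑ b : Xhat, rk k a b * F a b = ∑ x : Fin n → X, P x * F (x k) (g x k) := by
    intro k F
    have inner : ∀ x : Fin n → X, (∑ a : X, ∑ b : Xhat,
        if x k = a ∧ g x k = b then P x * F a b else 0) = P x * F (x k) (g x k) := by
      intro x
      simp [ite_and, Finset.sum_ite_eq, Finset.sum_ite_eq']
    calc ∑ a : X, ∑ b : Xhat, rk k a b * F a b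
        = ∑ a : X, ∑ b : Xhat, ∑ x : Fin n → X,
            (if x k = a ∧ g x k = b then P x * F a b else 0) := by
          apply Finset.sum_congr rfl; intro a _
          apply Finset.sum_congr rfl; intro b _
          rw [show rk k a b = ∑ x : Fin n → X, if x k = a ∧ g x k = b then P x else 0 from rfl,
            Finset.sum_mul]
          apply Finset.sum_congr rfl; intro x _
          by_cases h : x k = a ∧ g x k = b <;> simp [h]
      _ = ∑ x : Fin n → X, ∑ a : X, ∑ b : Xhat,
            (if x k = a ∧ g x k = b then P x * F a b else 0) := by
          exact (Finset.sum_congr rfl fun a (_ : a ∈ Finset.univ) =>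
            (Finset.sum_comm (s := Finset.univ) (t := Finset.univ))).trans Finset.sum_comm
      _ = ∑ x : Fin n → X, P x * F (x k) (g x k) := Finset.sum_congr rfl fun x _ => inner x
  have hrbar0 : ∀ a b, 0 ≤ rbar a b :=
    fun a b => div_nonneg (Finset.sum_nonneg fun k _ => hrk0 k a b) hnpos.le
  have hrbarmargU : ∀ a, margU rbar a = p a := by
    intro a
    calc margU rbar a = ∑ b : Xhat, (∑ k : Fin n, rk k a b) / (n:ℝ) := rfl
      _ = (∑ k : Fin n, ∑ b : Xhat, rk k a b) / (n:ℝ) := by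
          rw [← Finset.sum_div, Finset.sum_comm]
      _ = (∑ k : Fin n, p a) / (n:ℝ) := by
          rw [Finset.sum_congr rfl fun k _ => show (∑ b : Xhat, rk k a b) = p a from hrkmargU k a]
      _ = p a := by
          rw [Finset.sum_const, Finset.card_univ, Fintype.card_fin, nsmul_eq_mul]
          field_simp
  have hrbarsum : ∑ a : X, ∑ b : Xhat, rbar a b = 1 := by
    calc ∑ a : X, ∑ b : Xhat, rbar a b = ∑ a : X, margU rbar a := rfl
      _ = ∑ a : X, p a := Finset.sum_congr rfl fun a _ => hrbarmargU a
      _ = 1 := hp1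
  -- the averaged test channel
  set qbar : X → Xhat → ℝ :=
    fun a b => if p a = 0 then ((Fintype.card Xhat : ℝ))⁻¹ else rbar a b / p a with hqbardef
  have hrbar_eq : (fun a b => p a * qbar a b) = rbar := by
    funext a b
    by_cases hpa : p a = 0
    · have hz : rbar a b = 0 := by
        have h1 : ∀ k : Fin n, rk k a b = 0 := by
          intro k
          have hle : rk k a b ≤ p a := by
            rw [← hrkmargU k a]
            exact RD_le_margU (rk k) (hrk0 k) a b
          exact le_antisymm (hpa ▸ hle) (hrk0 k a b)
        show (∑ k : Fin n, rk k a b) / (n:ℝ) = 0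
        rw [Finset.sum_congr rfl fun k _ => h1 k]
        simp
      simp [hpa, hz]
    · show p a * qbar a b = rbar a b
      rw [hqbardef]
      simp only [if_neg hpa]
      field_simp
  have htc : IsTestChannel qbar := by
    have hcard : (0:ℝ) < (Fintype.card Xhat : ℝ) := by
      exact_mod_cast Fintype.card_pos (α := Xhat)
    constructor
    · intro a b
      by_cases hpa : p a = 0
      · rw [hqbardef]; simp only [if_pos hpa]; positivity
      · rw [hqbardef]; simp only [if_neg hpa]
        exact div_nonneg (hrbar0 a b) (hp0 a)
    · intro a
      by_cases hpa : p a = 0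
      · rw [hqbardef]
        simp only [if_pos hpa]
        rw [Finset.sum_const, Finset.card_univ, nsmul_eq_mul]
        field_simp
      · rw [hqbardef]
        simp only [if_neg hpa]
        rw [← Finset.sum_div, show (∑ b : Xhat, rbar a b) = p a from hrbarmargU a]
        field_simp
  have hdist : (∑ a : X, ∑ b : Xhat, p a * qbar a b * d (cX a) (cT b)) ≤ D := by
    calc ∑ a : X, ∑ b : Xhat, p a * qbar a b * d (cX a) (cT b)
        = ∑ a : X, ∑ b : Xhat, rbar a b * d (cX a) (cT b) :=
          Finset.sum_congr rfl fun a _ => Finset.sum_congr rfl fun b _ => by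
            rw [show p a * qbar a b = rbar a b from congrFun (congrFun hrbar_eq a) b]
      _ = ∑ a : X, ∑ b : Xhat, (∑ k : Fin n, rk k a b * d (cX a) (cT b)) / (n:ℝ) :=
          Finset.sum_congr rfl fun a _ => Finset.sum_congr rfl fun b _ => by
            show (∑ k : Fin n, rk k a b) / (n:ℝ) * d (cX a) (cT b) = _
            rw [div_mul_eq_mul_div, Finset.sum_mul]
      _ = ∑ k : Fin n, (∑ a : X, ∑ b : Xhat, rk k a b * d (cX a) (cT b)) / (n:ℝ) := by
          simp only [← Finset.sum_div]
          congr 1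
          exact (Finset.sum_congr rfl fun a (_ : a ∈ Finset.univ) =>
            (Finset.sum_comm (s := Finset.univ) (t := Finset.univ))).trans Finset.sum_comm
      _ = ∑ k : Fin n, (∑ x : Fin n → X, P x * d (cX (x k)) (cT (g x k))) / (n:ℝ) :=
          Finset.sum_congr rfl fun k _ => by
            rw [hswap k (fun a b => d (cX a) (cT b))]
      _ = ∑ x : Fin n → X, P x * (1/(n:ℝ) * ∑ k : Fin n, d (cX (x k)) (cT (g x k))) := by
          simp only [Finset.sum_div]
          rw [Finset.sum_comm]
          apply Finset.sum_congr rfl; intro x _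
          rw [← Finset.sum_div, ← Finset.mul_sum]
          ring
      _ ≤ D := by
          have := hcon
          simp only [hPdef, hgdef]
          exact this
  -- membership and bddBelow
  have hmem : downSMI rbar cX cT ∈ {r : ℝ | ∃ q : X → Xhat → ℝ, IsTestChannel q ∧
      (∑ x : X, ∑ xh : Xhat, p x * q x xh * d (cX x) (cT xh)) ≤ D ∧
      r = downSMI (fun x xh => p x * q x xh) cX cT} :=
    ⟨qbar, htc, hdist, by rw [hrbar_eq]⟩
  have hbdd : BddBelow {r : ℝ | ∃ q : X → Xhat → ℝ, IsTestChannel q ∧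
      (∑ x : X, ∑ xh : Xhat, p x * q x xh * d (cX x) (cT xh)) ≤ D ∧
      r = downSMI (fun x xh => p x * q x xh) cX cT} := by
    haveI : Nonempty X := ⟨x0⟩
    haveI : Nonempty Xhat := hXhatne
    refine ⟨-(Real.logb 2 ((Fintype.card X : ℝ) * (Fintype.card Xhat : ℝ))), fun r hr => ?_⟩
    obtain ⟨q, ⟨hq0, hq1⟩, hqd, rfl⟩ := hr
    set w : X → Xhat → ℝ := fun a b => p a * q a b with hwdef
    have hw0 : ∀ a b, 0 ≤ w a b := fun a b => mul_nonneg (hp0 a) (hq0 a b)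
    have hw1 : ∑ a : X, ∑ b : Xhat, w a b = 1 := by
      calc ∑ a : X, ∑ b : Xhat, w a b = ∑ a : X, p a * ∑ b : Xhat, q a b :=
            Finset.sum_congr rfl fun a _ => by rw [Finset.mul_sum]
        _ = ∑ a : X, p a := Finset.sum_congr rfl fun a _ => by rw [hq1 a, mul_one]
        _ = 1 := hp1
    have hmU1 : ∑ a : X, margU w a = 1 := hw1
    have hmV1 : ∑ b : Xhat, margV w b = 1 := by
      rw [show (∑ b : Xhat, margV w b) = ∑ b : Xhat, ∑ a : X, w a b from rfl, Finset.sum_comm]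
      exact hw1
    have hU := RD_semEntropy_nonneg (margU w) (RD_margU_nonneg w hw0) (le_of_eq hmU1) cX
    have hV := RD_semEntropy_nonneg (margV w) (RD_margV_nonneg w hw0) (le_of_eq hmV1) cT
    have hJ := RD_shJointEntropy_le w hw0 hw1
    unfold downSMI
    linarith
  have hsinf : semRateDistortion p cX cT d D ≤ downSMI rbar cX cT := csInf_le hbdd hmem
  -- analytic chain
  have hstep1 : downSMI rbar cX cT ≤ mutualInfo rbar := by
    unfold downSMI mutualInfo
    have h1 := RD_semEntropy_le (margU rbar) (RD_margU_nonneg rbar hrbar0) cX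
    have h2 := RD_semEntropy_le (margV rbar) (RD_margV_nonneg rbar hrbar0) cT
    linarith
  have hconv : (n:ℝ) * mutualInfo rbar ≤ ∑ k, mutualInfo (rk k) := by
    have key : ∀ k : Fin n, (∑ a : X, ∑ b : Xhat, rk k a b *
        Real.logb 2 (rbar a b / (margU rbar a * margV rbar b))) ≤ mutualInfo (rk k) := by
      intro k
      rw [RD_mutualInfo_eq (rk k) (hrk0 k)]
      -- Gibbs with sigma
      have hsig0 : ∀ ab : X × Xhat,
          0 ≤ margV (rk k) ab.2 * (rbar ab.1 ab.2 / margV rbar ab.2) := fun ab =>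
        mul_nonneg (RD_margV_nonneg _ (hrk0 k) _)
          (div_nonneg (hrbar0 _ _) (RD_margV_nonneg _ hrbar0 _))
      have habs : ∀ ab : X × Xhat, rk k ab.1 ab.2 ≠ 0 →
          margV (rk k) ab.2 * (rbar ab.1 ab.2 / margV rbar ab.2) ≠ 0 := by
        intro ab hne
        have hA : 0 < rk k ab.1 ab.2 := (hrk0 k ab.1 ab.2).lt_of_ne' hne
        have hB : 0 < margV (rk k) ab.2 := lt_of_lt_of_le hA (RD_le_margV _ (hrk0 k) _ _)
        have hC : 0 < rbar ab.1 ab.2 := by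
          have h1 : rk k ab.1 ab.2 ≤ ∑ k' : Fin n, rk k' ab.1 ab.2 :=
            Finset.single_le_sum (f := fun k' => rk k' ab.1 ab.2)
              (fun k' _ => hrk0 k' ab.1 ab.2) (Finset.mem_univ k)
          exact div_pos (lt_of_lt_of_le hA h1) hnpos
        have hE : 0 < margV rbar ab.2 := lt_of_lt_of_le hC (RD_le_margV _ hrbar0 _ _)
        positivity
      have hsum : ∑ ab : X × Xhat, margV (rk k) ab.2 * (rbar ab.1 ab.2 / margV rbar ab.2)
          ≤ ∑ ab : X × Xhat, rk k ab.1 ab.2 := by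
        rw [Fintype.sum_prod_type, Fintype.sum_prod_type]
        rw [show (∑ a : X, ∑ b : Xhat, rk k a b) = 1 from hrksum k]
        calc ∑ a : X, ∑ b : Xhat, margV (rk k) b * (rbar a b / margV rbar b)
            = ∑ b : Xhat, ∑ a : X, margV (rk k) b * (rbar a b / margV rbar b) :=
              Finset.sum_comm
          _ = ∑ b : Xhat, margV (rk k) b * (margV rbar b / margV rbar b) := by
              apply Finset.sum_congr rfl; intro b _
              rw [← Finset.mul_sum, ← Finset.sum_div]
              rfl
          _ ≤ ∑ b : Xhat, margV (rk k) b := by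
              apply Finset.sum_le_sum; intro b _
              exact mul_le_of_le_one_right (RD_margV_nonneg _ (hrk0 k) b) (div_self_le_one _)
          _ = ∑ b : Xhat, ∑ a : X, rk k a b := rfl
          _ = 1 := by rw [Finset.sum_comm]; exact hrksum k
      have hg := RD_gibbs (I := X × Xhat) (fun ab => rk k ab.1 ab.2)
        (fun ab => margV (rk k) ab.2 * (rbar ab.1 ab.2 / margV rbar ab.2))
        (fun ab => hrk0 k ab.1 ab.2) hsig0 habs hsum
      have e2 : ∑ ab : X × Xhat, rk k ab.1 ab.2 * Real.logb 2 (rk k ab.1 ab.2 /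
            (margV (rk k) ab.2 * (rbar ab.1 ab.2 / margV rbar ab.2)))
          = ∑ a : X, ∑ b : Xhat,
              (rk k a b * Real.logb 2 (rk k a b / (margU (rk k) a * margV (rk k) b))
               - rk k a b * Real.logb 2 (rbar a b / (margU rbar a * margV rbar b))) := by
        rw [Fintype.sum_prod_type]
        refine Finset.sum_congr rfl fun a _ => Finset.sum_congr rfl fun b _ => ?_
        rcases (hrk0 k a b).eq_or_lt with h0 | h0
        · simp [← h0]
        · have hA : 0 < rk k a b := h0
          have hB : 0 < margV (rk k) b := lt_of_lt_of_le hA (RD_le_margV _ (hrk0 k) _ _)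
          have hC : 0 < rbar a b := by
            have h1 : rk k a b ≤ ∑ k' : Fin n, rk k' a b :=
              Finset.single_le_sum (f := fun k' => rk k' a b)
                (fun k' _ => hrk0 k' a b) (Finset.mem_univ k)
            exact div_pos (lt_of_lt_of_le hA h1) hnpos
          have hE : 0 < margV rbar b := lt_of_lt_of_le hC (RD_le_margV _ hrbar0 _ _)
          have hpa : 0 < margU (rk k) a := lt_of_lt_of_le hA (RD_le_margU _ (hrk0 k) _ _)
          have hpa' : margU rbar a = margU (rk k) a := by
            rw [hrbarmargU a, hrkmargU k a]
          rw [hpa']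
          rw [Real.logb_div hA.ne' (by positivity), Real.logb_mul hB.ne' (by positivity),
            Real.logb_div hC.ne' hE.ne',
            Real.logb_div hA.ne' (by positivity), Real.logb_mul hpa.ne' hB.ne',
            Real.logb_div hC.ne' (by positivity), Real.logb_mul hpa.ne' hE.ne']
          ring
      rw [e2] at hg
      simp only [Finset.sum_sub_distrib] at hg
      linarith
    calc (n:ℝ) * mutualInfo rbar
        = ∑ k : Fin n, ∑ a : X, ∑ b : Xhat, rk k a b *
            Real.logb 2 (rbar a b / (margU rbar a * margV rbar b)) := by
          rw [RD_mutualInfo_eq rbar hrbar0]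
          calc (n:ℝ) * ∑ a : X, ∑ b : Xhat, rbar a b *
              Real.logb 2 (rbar a b / (margU rbar a * margV rbar b))
              = ∑ a : X, ∑ b : Xhat, ∑ k : Fin n, rk k a b *
                  Real.logb 2 (rbar a b / (margU rbar a * margV rbar b)) := by
                rw [Finset.mul_sum]
                refine Finset.sum_congr rfl fun a _ => ?_
                rw [Finset.mul_sum]
                refine Finset.sum_congr rfl fun b _ => ?_
                rw [← Finset.sum_mul, ← mul_assoc]
                congr 1
                show (n:ℝ) * ((∑ k : Fin n, rk k a b) / (n:ℝ)) = _
                field_simp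
            _ = ∑ k : Fin n, ∑ a : X, ∑ b : Xhat, rk k a b *
                  Real.logb 2 (rbar a b / (margU rbar a * margV rbar b)) :=
                (Finset.sum_congr rfl fun a (_ : a ∈ Finset.univ) =>
                  (Finset.sum_comm (s := Finset.univ) (t := Finset.univ))).trans
                  Finset.sum_comm
      _ ≤ ∑ k, mutualInfo (rk k) := Finset.sum_le_sum fun k _ => key k
  have hstep3 : ∑ k, mutualInfo (rk k) ≤ Real.logb 2 (m n) := by
    have hmnR : (0:ℝ) < (m n : ℝ) := by exact_mod_cast hmn
    set Bf : (Fin n → X) → ℝ := fun x =>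
      ((m n : ℝ))⁻¹ * ∏ k : Fin n, (rk k (x k) (g x k) / margV (rk k) (g x k)) with hBdef
    have hBf : ∀ x : Fin n → X, Bf x
        = ((m n : ℝ))⁻¹ * ∏ k : Fin n, (rk k (x k) (g x k) / margV (rk k) (g x k)) :=
      fun x => rfl
    have hB0 : ∀ x, 0 ≤ Bf x := fun x => mul_nonneg (by positivity)
      (Finset.prod_nonneg fun k _ => div_nonneg (hrk0 k _ _) (RD_margV_nonneg _ (hrk0 k) _))
    have habs : ∀ x, P x ≠ 0 → Bf x ≠ 0 := by
      intro x hx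
      have hPx : 0 < P x := (hP0 x).lt_of_ne' hx
      have hfac : ∀ k : Fin n, 0 < rk k (x k) (g x k) / margV (rk k) (g x k) := by
        intro k
        have h1 : 0 < rk k (x k) (g x k) := lt_of_lt_of_le hPx (hrkP k x)
        exact div_pos h1 (lt_of_lt_of_le h1 (RD_le_margV _ (hrk0 k) _ _))
      rw [hBf x]
      exact (mul_pos (inv_pos.mpr hmnR) (Finset.prod_pos fun k _ => hfac k)).ne'
    have hBsum : ∑ x : Fin n → X, Bf x ≤ 1 := by
      have hsub : Finset.univ.image g ⊆ Finset.univ.image (ψ n) := by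
        intro y hy
        rw [Finset.mem_image] at hy ⊢
        obtain ⟨x, _, rfl⟩ := hy
        exact ⟨φ n x, Finset.mem_univ _, rfl⟩
      have himg : ((Finset.univ.image g).card : ℝ) ≤ (m n : ℝ) := by
        have h1 : (Finset.univ.image g).card ≤ (Finset.univ.image (ψ n)).card :=
          Finset.card_le_card hsub
        have h2 : (Finset.univ.image (ψ n)).card ≤ m n := by
          calc (Finset.univ.image (ψ n)).card
              ≤ (Finset.univ : Finset (Fin (m n))).card := Finset.card_image_le
            _ = m n := by simp
        exact_mod_cast le_trans h1 h2
      have hfib := Finset.sum_fiberwise_eq_sum_filter Finset.univ (Finset.univ.image g) g Bf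
      have hful : Finset.univ.filter (fun x => g x ∈ Finset.univ.image g) = Finset.univ :=
        Finset.filter_true_of_mem (fun x _ => Finset.mem_image_of_mem g (Finset.mem_univ x))
      rw [hful] at hfib
      rw [← hfib]
      calc ∑ y ∈ Finset.univ.image g, ∑ x ∈ Finset.univ.filter (fun x => g x = y), Bf x
          ≤ ∑ y ∈ Finset.univ.image g, ((m n : ℝ))⁻¹ := by
            apply Finset.sum_le_sum
            intro y hy
            have e1 : ∀ x ∈ Finset.univ.filter (fun x => g x = y), Bf x
                = (m n : ℝ)⁻¹ * ∏ k : Fin n, (rk k (x k) (y k) / margV (rk k) (y k)) := by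
              intro x hx
              have hgx : g x = y := (Finset.mem_filter.mp hx).2
              rw [hBf x, hgx]
            rw [Finset.sum_congr rfl e1]
            calc ∑ x ∈ Finset.univ.filter (fun x => g x = y),
                  (m n : ℝ)⁻¹ * ∏ k : Fin n, (rk k (x k) (y k) / margV (rk k) (y k))
                ≤ ∑ x : Fin n → X,
                  (m n : ℝ)⁻¹ * ∏ k : Fin n, (rk k (x k) (y k) / margV (rk k) (y k)) :=
                  Finset.sum_le_sum_of_subset_of_nonneg (Finset.filter_subset _ _)
                    (fun x _ _ => mul_nonneg (by positivity)
                      (Finset.prod_nonneg fun k _ => div_nonneg (hrk0 k _ _)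
                        (RD_margV_nonneg _ (hrk0 k) _)))
              _ = (m n : ℝ)⁻¹ * ∑ x : Fin n → X,
                    ∏ k : Fin n, (rk k (x k) (y k) / margV (rk k) (y k)) := by
                  rw [Finset.mul_sum]
              _ ≤ (m n : ℝ)⁻¹ * 1 := by
                  apply mul_le_mul_of_nonneg_left ?_ (by positivity)
                  rw [← Fintype.prod_sum
                    (f := fun (k : Fin n) (c : X) => rk k c (y k) / margV (rk k) (y k))]
                  apply Finset.prod_le_one
                  · intro k _
                    exact Finset.sum_nonneg fun c _ =>
                      div_nonneg (hrk0 k _ _) (RD_margV_nonneg _ (hrk0 k) _)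
                  · intro k _
                    rw [← Finset.sum_div]
                    exact div_self_le_one _
              _ = (m n : ℝ)⁻¹ := mul_one _
        _ = ((Finset.univ.image g).card : ℝ) * (m n : ℝ)⁻¹ := by
            rw [Finset.sum_const, nsmul_eq_mul]
        _ ≤ (m n : ℝ) * (m n : ℝ)⁻¹ := mul_le_mul_of_nonneg_right himg (by positivity)
        _ = 1 := mul_inv_cancel₀ hmnR.ne'
    have hg2 := RD_gibbs (I := Fin n → X) P Bf hP0 hB0 habs (by rw [hPsum]; exact hBsum)
    have eMI : ∀ k : Fin n, mutualInfo (rk k)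
        = ∑ x : Fin n → X, P x * Real.logb 2 (rk k (x k) (g x k) /
            (p (x k) * margV (rk k) (g x k))) := by
      intro k
      rw [RD_mutualInfo_eq (rk k) (hrk0 k)]
      rw [← hswap k (fun a b => Real.logb 2 (rk k a b / (p a * margV (rk k) b)))]
      refine Finset.sum_congr rfl fun a _ => Finset.sum_congr rfl fun b _ => ?_
      rw [hrkmargU k a]
    have eId : ∀ x : Fin n → X, P x * Real.logb 2 (P x / Bf x)
        = P x * Real.logb 2 (m n) - ∑ k : Fin n, P x * Real.logb 2 (rk k (x k) (g x k) /
            (p (x k) * margV (rk k) (g x k))) := by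
      intro x
      rcases (hP0 x).eq_or_lt with h0 | h0
      · simp [← h0]
      · have hx : P x ≠ 0 := h0.ne'
        have hpk : ∀ k : Fin n, 0 < p (x k) := by
          intro k
          rcases (hp0 (x k)).eq_or_lt with h | h
          · exfalso; apply hx
            show ∏ j : Fin n, p (x j) = 0
            exact Finset.prod_eq_zero (Finset.mem_univ k) h.symm
          · exact h
        have hrkpos : ∀ k : Fin n, 0 < rk k (x k) (g x k) :=
          fun k => lt_of_lt_of_le h0 (hrkP k x)
        have hmVpos : ∀ k : Fin n, 0 < margV (rk k) (g x k) :=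
          fun k => lt_of_lt_of_le (hrkpos k) (RD_le_margV _ (hrk0 k) _ _)
        have hBpos : 0 < Bf x := lt_of_le_of_ne (hB0 x) (Ne.symm (habs x hx))
        have e1 : Real.logb 2 (P x / Bf x) = Real.logb 2 (P x) - Real.logb 2 (Bf x) :=
          Real.logb_div hx hBpos.ne'
        have e2 : Real.logb 2 (Bf x) = -Real.logb 2 (m n)
            + ∑ k : Fin n, (Real.logb 2 (rk k (x k) (g x k))
              - Real.logb 2 (margV (rk k) (g x k))) := by
          rw [hBf x]
          rw [Real.logb_mul (by positivity)
            ((Finset.prod_pos fun k _ => div_pos (hrkpos k) (hmVpos k)).ne')]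
          rw [Real.logb_inv]
          congr 1
          rw [Real.logb_prod _ _ (fun k _ => (div_pos (hrkpos k) (hmVpos k)).ne')]
          exact Finset.sum_congr rfl fun k _ =>
            Real.logb_div (hrkpos k).ne' (hmVpos k).ne'
        have e3 : Real.logb 2 (P x) = ∑ k : Fin n, Real.logb 2 (p (x k)) := by
          rw [show P x = ∏ k : Fin n, p (x k) from rfl]
          rw [Real.logb_prod _ _ (fun k _ => (hpk k).ne')]
        have e4 : ∀ k : Fin n,
            Real.logb 2 (rk k (x k) (g x k) / (p (x k) * margV (rk k) (g x k)))
            = Real.logb 2 (rk k (x k) (g x k)) - Real.logb 2 (p (x k))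
              - Real.logb 2 (margV (rk k) (g x k)) := by
          intro k
          rw [Real.logb_div (hrkpos k).ne' (mul_pos (hpk k) (hmVpos k)).ne',
            Real.logb_mul (hpk k).ne' (hmVpos k).ne']
          ring
        calc P x * Real.logb 2 (P x / Bf x)
            = P x * ((∑ k : Fin n, Real.logb 2 (p (x k))) - (-Real.logb 2 (m n)
                + ∑ k : Fin n, (Real.logb 2 (rk k (x k) (g x k))
                  - Real.logb 2 (margV (rk k) (g x k))))) := by rw [e1, e2, e3]
          _ = P x * Real.logb 2 (m n) - P x * ∑ k : Fin n,
                (Real.logb 2 (rk k (x k) (g x k)) - Real.logb 2 (p (x k))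
                  - Real.logb 2 (margV (rk k) (g x k))) := by
              simp only [Finset.sum_sub_distrib]
              ring
          _ = P x * Real.logb 2 (m n) - ∑ k : Fin n, P x * Real.logb 2 (rk k (x k) (g x k) /
                (p (x k) * margV (rk k) (g x k))) := by
              congr 1
              rw [Finset.mul_sum]
              exact Finset.sum_congr rfl fun k _ => by rw [e4 k]
    calc ∑ k : Fin n, mutualInfo (rk k)
        = ∑ k : Fin n, ∑ x : Fin n → X, P x * Real.logb 2 (rk k (x k) (g x k) /
            (p (x k) * margV (rk k) (g x k))) :=
          Finset.sum_congr rfl fun k _ => eMI k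
      _ = ∑ x : Fin n → X, ∑ k : Fin n, P x * Real.logb 2 (rk k (x k) (g x k) /
            (p (x k) * margV (rk k) (g x k))) := Finset.sum_comm
      _ = ∑ x : Fin n → X, (P x * Real.logb 2 (m n) - P x * Real.logb 2 (P x / Bf x)) :=
          Finset.sum_congr rfl fun x _ => by rw [eId x]; ring
      _ = Real.logb 2 (m n) - ∑ x : Fin n → X, P x * Real.logb 2 (P x / Bf x) := by
          rw [Finset.sum_sub_distrib, ← Finset.sum_mul, hPsum, one_mul]
      _ ≤ Real.logb 2 (m n) := by linarith [hg2]
  have hstep4 : Real.logb 2 (m n) ≤ (n:ℝ) * R := by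
    have h1 : (0:ℝ) < (m n : ℝ) := by exact_mod_cast hmn
    calc Real.logb 2 (m n) ≤ Real.logb 2 (2 ^ ((n : ℝ) * R)) :=
          Real.logb_le_logb_of_le one_lt_two h1 (hm n)
      _ = (n:ℝ) * R := Real.logb_rpow (by norm_num) (by norm_num)
  have : (n:ℝ) * downSMI rbar cX cT ≤ (n:ℝ) * R := by
    calc (n:ℝ) * downSMI rbar cX cT ≤ (n:ℝ) * mutualInfo rbar := by
          exact mul_le_mul_of_nonneg_left hstep1 hnpos.le
      _ ≤ ∑ k, mutualInfo (rk k) := hconv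
      _ ≤ Real.logb 2 (m n) := hstep3
      _ ≤ (n:ℝ) * R := hstep4
  have hfin : downSMI rbar cX cT ≤ R := le_of_mul_le_mul_left (by linarith) hnpos
  linarith
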